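/- Let λ > 0 and k a positive integer, and set α = 1 + (1+λ)^k/(λ(1+kλ)), β = (1+λ)/(1+kλ). Then for every non-negative integer d, α·λ/(λ+(1+λ)^d) + β·d·λ·(1+λ)^{d-1}/(λ+(1+λ)^d) ≥ 1. -/

import Mathlib

lemma aux_bern (lam : ℝ) (hlam : 0 < lam) : ∀ m : ℕ, (1 - m * lam) * (1 + lam) ^ m ≤ 1 := by
  intro m
  induction m with
  | zero => simp
  | succ n ih =>
    have hp : (0:ℝ) < (1 + lam) ^ n := by positivity
    push_cast
    push_cast at ih
    rw [pow_succ]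
    nlinarith [sq_nonneg lam, mul_pos hlam hp, mul_pos (mul_pos hlam hlam) hp,
      mul_nonneg (mul_nonneg (Nat.cast_nonneg n (α := ℝ)) (mul_pos hlam hlam).le) hp.le]

theorem stmt_6 (lam : ℝ) (hlam : 0 < lam) (k : ℕ) (hk : 1 ≤ k)
    (α β : ℝ)
    (hα : α = 1 + (1 + lam) ^ k / (lam * (1 + k * lam)))
    (hβ : β = (1 + lam) / (1 + k * lam)) :
    ∀ d : ℕ,
      1 ≤ α * lam / (lam + (1 + lam) ^ d)
        + β * d * lam * (1 + lam) ^ ((d : ℝ) - 1) / (lam + (1 + lam) ^ d) := by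
  intro d
  have ht : (0:ℝ) < 1 + lam := by linarith
  have hD : (0:ℝ) < lam + (1 + lam) ^ d := by positivity
  have hkl : (0:ℝ) < 1 + (k:ℝ) * lam := by positivity
  have hkp : (0:ℝ) < (1 + lam) ^ k := by positivity
  have hdp : (0:ℝ) < (1 + lam) ^ d := by positivity
  -- key inequality
  have key : (1 + ((k:ℝ) - d) * lam) * (1 + lam) ^ d ≤ (1 + lam) ^ k := by
    rcases le_or_gt d k with h | h
    · have hb : 1 + ((k - d : ℕ) : ℝ) * lam ≤ (1 + lam) ^ (k - d) :=
        one_add_mul_le_pow (by linarith) _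
      have hc : ((k - d : ℕ) : ℝ) = (k:ℝ) - d := by
        push_cast [Nat.cast_sub h]; ring
      calc (1 + ((k:ℝ) - d) * lam) * (1 + lam) ^ d
          ≤ (1 + lam) ^ (k - d) * (1 + lam) ^ d := by
            rw [← hc]; exact mul_le_mul_of_nonneg_right hb hdp.le
        _ = (1 + lam) ^ k := by rw [← pow_add, Nat.sub_add_cancel h]
    · have hm := aux_bern lam hlam (d - k)
      have hc : ((d - k : ℕ) : ℝ) = (d:ℝ) - k := by
        push_cast [Nat.cast_sub h.le]; ring
      have : (1 - ((d:ℝ) - k) * lam) * (1 + lam) ^ (d - k) ≤ 1 := by rwa [hc] at hm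
      have h2 : (1 - ((d:ℝ) - k) * lam) * (1 + lam) ^ (d - k) * (1 + lam) ^ k ≤ (1 + lam) ^ k := by
        nlinarith
      have h3 : (1 + lam) ^ (d - k) * (1 + lam) ^ k = (1 + lam) ^ d := by
        rw [← pow_add, Nat.sub_add_cancel h.le]
      calc (1 + ((k:ℝ) - d) * lam) * (1 + lam) ^ d
          = (1 - ((d:ℝ) - k) * lam) * (1 + lam) ^ (d - k) * (1 + lam) ^ k := by
            rw [mul_assoc, h3]; ring
        _ ≤ (1 + lam) ^ k := h2
  have hrw : (1 + lam) ^ ((d : ℝ) - 1) = (1 + lam) ^ d / (1 + lam) := by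
    rw [Real.rpow_sub ht, Real.rpow_natCast, Real.rpow_one]
  rw [hα, hβ, hrw, ← add_div, le_div_iff₀ hD]
  have hne1 : lam ≠ 0 := hlam.ne'
  have hne2 : (1:ℝ) + (k:ℝ) * lam ≠ 0 := hkl.ne'
  have hne3 : (1:ℝ) + lam ≠ 0 := ht.ne'
  field_simp
  ring_nf
  nlinarith [mul_le_mul_of_nonneg_left key hlam.le, mul_pos hlam hkl, mul_pos hlam hdp]
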